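/- Fix θ ≥ 1, s > 0 and N ≥ 2, and let λ ∈ 𝕐^N be distributed according to the discrete β-ensemble ℙ_N^s with ℓ_i = λ_{N−i+1} + θ·i. Then 𝔼[ ∏_{j=1}^{N−1} (1 − 1/(ℓ_N − ℓ_j))·(1 − (2θ−1)/(ℓ_N − ℓ_j + θ − 1)) ] = 𝔼[ sθ/(ℓ_N + 1) ]. -/

import Mathlib

open Filter MeasureTheory

attribute [local instance] Classical.propDecidable

noncomputable section

/-- Partitions with at most `N` parts, as antitone tuples of naturals
(`l 0 = λ₁` is the largest part). -/
abbrev YoungN (N : ℕ) : Type := {l : Fin N → ℕ // Antitone l}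

/-- `ell θ l j = λ_{N-j+1} + θ·j` for `1 ≤ j ≤ N` (junk value `0` otherwise). -/
def ell (θ : ℝ) {N : ℕ} (l : YoungN N) (j : ℕ) : ℝ :=
  if h : 1 ≤ j ∧ j ≤ N then (l.val ⟨N - j, by omega⟩ : ℝ) + θ * j else 0

/-- The weight `W_N^s(λ)` of the discrete β-ensemble. -/
def betaWeight (θ s : ℝ) (N : ℕ) (l : YoungN N) : ℝ :=
  (∏ i ∈ Finset.Icc 1 N, ∏ j ∈ Finset.Icc 1 N,
    if i < j then
      Real.Gamma (ell θ l j - ell θ l i + 1) * Real.Gamma (ell θ l j - ell θ l i + θ) /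
        (Real.Gamma (ell θ l j - ell θ l i) * Real.Gamma (ell θ l j - ell θ l i + 1 - θ))
    else 1) *
  ∏ i ∈ Finset.Icc 1 N, (s * θ) ^ (ell θ l i) / Real.Gamma (ell θ l i + 1)

/-- Expectation under the discrete β-ensemble `ℙ_N^s`. -/
def betaE (θ s : ℝ) (N : ℕ) (f : YoungN N → ℝ) : ℝ :=
  (∑' l : YoungN N, betaWeight θ s N l * f l) / ∑' l : YoungN N, betaWeight θ s N l

/-- Probability of an event under the discrete β-ensemble `ℙ_N^s`. -/
def betaP (θ s : ℝ) (N : ℕ) (A : YoungN N → Prop) : ℝ :=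
  betaE θ s N fun l => if A l then 1 else 0

def GG (θ d : ℝ) : ℝ :=
  Real.Gamma (d + 1) * Real.Gamma (d + θ) / (Real.Gamma d * Real.Gamma (d + 1 - θ))

lemma gammaKey (θ y : ℝ) (hθ : 1 ≤ θ) (hy : θ ≤ y) :
    GG θ (y + 1) * ((1 - 1 / (y + 1)) * (1 - (2 * θ - 1) / (y + 1 + θ - 1))) = GG θ y := by
  have hy0 : 0 < y := by linarith
  have h1 : (0:ℝ) < y + 1 := by linarith
  have h2 : (0:ℝ) < y + θ := by linarith
  have h3 : (0:ℝ) < y + 1 - θ := by linarith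
  have hg1 : 0 < Real.Gamma y := Real.Gamma_pos_of_pos hy0
  have hg2 : 0 < Real.Gamma (y + θ) := Real.Gamma_pos_of_pos h2
  have hg3 : 0 < Real.Gamma (y + 1 - θ) := Real.Gamma_pos_of_pos h3
  unfold GG
  rw [show y + 1 + θ - 1 = y + θ by ring]
  rw [show y + 1 + 1 = (y + 1) + 1 from rfl, Real.Gamma_add_one (ne_of_gt h1)]
  rw [show y + 1 + θ = (y + θ) + 1 by ring, Real.Gamma_add_one (ne_of_gt h2)]
  rw [show y + 1 + 1 - θ = (y + 1 - θ) + 1 by ring, Real.Gamma_add_one (ne_of_gt h3)]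
  rw [Real.Gamma_add_one (ne_of_gt hy0)]
  field_simp
  ring

lemma prod_Icc_split {M : Type*} [CommMonoid M] {N : ℕ} (hN : 1 ≤ N) (f : ℕ → M) :
    ∏ i ∈ Finset.Icc 1 N, f i = (∏ i ∈ Finset.Icc 1 (N - 1), f i) * f N := by
  obtain ⟨M', rfl⟩ : ∃ M', N = M' + 1 := ⟨N - 1, by omega⟩
  rw [Nat.add_sub_cancel]
  exact Finset.prod_Icc_succ_top (by omega) f

lemma ell_eq (θ : ℝ) {N : ℕ} (l : YoungN N) {j : ℕ} (h1 : 1 ≤ j) (h2 : j ≤ N) :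
    ell θ l j = (l.val ⟨N - j, by omega⟩ : ℝ) + θ * j := dif_pos ⟨h1, h2⟩

lemma ell_pos (θ : ℝ) (hθ : 1 ≤ θ) {N : ℕ} (l : YoungN N) {j : ℕ} (h1 : 1 ≤ j) (h2 : j ≤ N) :
    0 < ell θ l j := by
  rw [ell_eq θ l h1 h2]
  have : (1:ℝ) ≤ j := by exact_mod_cast h1
  have h0 : (0:ℝ) ≤ (l.val ⟨N - j, by omega⟩ : ℝ) := Nat.cast_nonneg _
  nlinarith

lemma ell_diff_ge (θ : ℝ) (hθ : 0 ≤ θ) {N : ℕ} (l : YoungN N) {i j : ℕ}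
    (h1 : 1 ≤ i) (hij : i < j) (h2 : j ≤ N) : θ ≤ ell θ l j - ell θ l i := by
  rw [ell_eq θ l (by omega) h2, ell_eq θ l h1 (by omega)]
  have hmono : l.val ⟨N - i, by omega⟩ ≤ l.val ⟨N - j, by omega⟩ := by
    apply l.2
    show (N - j : ℕ) ≤ N - i
    omega
  have hc : (l.val ⟨N - i, by omega⟩ : ℝ) ≤ (l.val ⟨N - j, by omega⟩ : ℝ) :=
    Nat.cast_le.2 hmono
  have hji : (i:ℝ) + 1 ≤ j := by exact_mod_cast hij
  nlinarith

def addOne {N : ℕ} (l : YoungN N) : YoungN N :=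
  ⟨fun i => if (i : ℕ) = 0 then l.val i + 1 else l.val i, by
    intro a b hab
    have h0 := l.2 hab
    have hab' : (a : ℕ) ≤ b := hab
    dsimp only
    split_ifs with h1' h2' h2' <;> omega⟩

lemma addOne_inj {N : ℕ} : Function.Injective (addOne (N := N)) := by
  intro a b h
  apply Subtype.ext; funext i
  have h' := congrFun (congrArg Subtype.val h) i
  simp only [addOne] at h'
  split_ifs at h' <;> omega

lemma ell_addOne (θ : ℝ) {N : ℕ} (l : YoungN N) {j : ℕ} (h1 : 1 ≤ j) (h2 : j ≤ N) :
    ell θ (addOne l) j = ell θ l j + if j = N then 1 else 0 := by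
  rw [ell_eq θ (addOne l) h1 h2, ell_eq θ l h1 h2]
  simp only [addOne]
  by_cases hj : j = N
  · subst hj
    rw [if_pos rfl]
    split_ifs with h
    · push_cast; ring
    · exfalso; omega
  · rw [if_neg hj]
    split_ifs with h
    · exfalso; omega
    · ring

lemma ell_val (θ : ℝ) {N : ℕ} (μ : YoungN N) {j : ℕ} (h1 : 1 ≤ j) (h2 : j ≤ N)
    (k : Fin N) (hk : (k : ℕ) = N - j) :
    ell θ μ j = (μ.val k : ℝ) + θ * j := by
  rw [ell_eq θ μ h1 h2]
  have hke : (⟨N - j, by omega⟩ : Fin N) = k := Fin.ext hk.symm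
  rw [hke]

lemma betaWeight_expand (θ s : ℝ) {N : ℕ} (hN : 1 ≤ N) (m : YoungN N) :
    betaWeight θ s N m =
      ((∏ j ∈ Finset.Icc 1 (N - 1), ∏ i ∈ Finset.Icc 1 N,
          if i < j then GG θ (ell θ m j - ell θ m i) else 1) *
        ∏ i ∈ Finset.Icc 1 (N - 1), GG θ (ell θ m N - ell θ m i)) *
      (((s * θ) ^ (ell θ m N) / Real.Gamma (ell θ m N + 1)) *
        ∏ i ∈ Finset.Icc 1 (N - 1), (s * θ) ^ (ell θ m i) / Real.Gamma (ell θ m i + 1)) := by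
  have hbw : betaWeight θ s N m =
      (∏ i ∈ Finset.Icc 1 N, ∏ j ∈ Finset.Icc 1 N,
        if i < j then GG θ (ell θ m j - ell θ m i) else 1) *
      ∏ i ∈ Finset.Icc 1 N, (s * θ) ^ (ell θ m i) / Real.Gamma (ell θ m i + 1) := rfl
  have hDP : (∏ i ∈ Finset.Icc 1 N, ∏ j ∈ Finset.Icc 1 N,
        if i < j then GG θ (ell θ m j - ell θ m i) else 1)
      = (∏ j ∈ Finset.Icc 1 (N - 1), ∏ i ∈ Finset.Icc 1 N,
          if i < j then GG θ (ell θ m j - ell θ m i) else 1)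
        * ∏ i ∈ Finset.Icc 1 (N - 1), GG θ (ell θ m N - ell θ m i) := by
    rw [Finset.prod_comm, prod_Icc_split hN]
    congr 1
    rw [prod_Icc_split hN (fun i => if i < N then GG θ (ell θ m N - ell θ m i) else 1)]
    rw [if_neg (lt_irrefl N), mul_one]
    exact Finset.prod_congr rfl fun i hi =>
      if_pos (by have := Finset.mem_Icc.mp hi; omega)
  rw [hbw, hDP, prod_Icc_split hN
    (fun i => (s * θ) ^ (ell θ m i) / Real.Gamma (ell θ m i + 1))]
  ring

lemma key (θ s : ℝ) (hθ : 1 ≤ θ) (hs : 0 < s) {N : ℕ} (hN : 2 ≤ N) (l : YoungN N) :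
    betaWeight θ s N (addOne l) *
      ∏ j ∈ Finset.Icc 1 (N - 1),
        (1 - 1 / (ell θ (addOne l) N - ell θ (addOne l) j)) *
          (1 - (2 * θ - 1) / (ell θ (addOne l) N - ell θ (addOne l) j + θ - 1)) =
    betaWeight θ s N l * (s * θ / (ell θ l N + 1)) := by
  have hN1 : 1 ≤ N := by omega
  have hθ0 : 0 < θ := by linarith
  have hellN : ell θ (addOne l) N = ell θ l N + 1 := by
    rw [ell_addOne θ l hN1 le_rfl, if_pos rfl]
  have hells : ∀ j ∈ Finset.Icc 1 (N - 1), ell θ (addOne l) j = ell θ l j := by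
    intro j hj
    have hj' := Finset.mem_Icc.mp hj
    rw [ell_addOne θ l hj'.1 (by omega), if_neg (by omega), add_zero]
  rw [betaWeight_expand θ s hN1 (addOne l), betaWeight_expand θ s hN1 l]
  have hDPeq : (∏ j ∈ Finset.Icc 1 (N - 1), ∏ i ∈ Finset.Icc 1 N,
        if i < j then GG θ (ell θ (addOne l) j - ell θ (addOne l) i) else 1)
      = ∏ j ∈ Finset.Icc 1 (N - 1), ∏ i ∈ Finset.Icc 1 N,
        if i < j then GG θ (ell θ l j - ell θ l i) else 1 := by
    refine Finset.prod_congr rfl fun j hj => Finset.prod_congr rfl fun i hi => ?_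
    have hj' := Finset.mem_Icc.mp hj
    have hi' := Finset.mem_Icc.mp hi
    by_cases hij : i < j
    · rw [if_pos hij, if_pos hij, hells j hj,
        hells i (Finset.mem_Icc.mpr ⟨hi'.1, by omega⟩)]
    · rw [if_neg hij, if_neg hij]
  have hSPeq : (∏ i ∈ Finset.Icc 1 (N - 1),
        (s * θ) ^ (ell θ (addOne l) i) / Real.Gamma (ell θ (addOne l) i + 1))
      = ∏ i ∈ Finset.Icc 1 (N - 1),
        (s * θ) ^ (ell θ l i) / Real.Gamma (ell θ l i + 1) := by
    exact Finset.prod_congr rfl fun i hi => by rw [hells i hi]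
  have hxpos : 0 < ell θ l N := ell_pos θ hθ l hN1 le_rfl
  have hspN : (s * θ) ^ (ell θ (addOne l) N) / Real.Gamma (ell θ (addOne l) N + 1)
      = (s * θ) ^ (ell θ l N) / Real.Gamma (ell θ l N + 1) * (s * θ / (ell θ l N + 1)) := by
    rw [hellN, Real.rpow_add_one (ne_of_gt (mul_pos hs hθ0)),
      Real.Gamma_add_one (ne_of_gt (by linarith : (0:ℝ) < ell θ l N + 1))]
    have hg : 0 < Real.Gamma (ell θ l N + 1) := Real.Gamma_pos_of_pos (by linarith)
    field_simp
  have hmerge : (∏ i ∈ Finset.Icc 1 (N - 1),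
        GG θ (ell θ (addOne l) N - ell θ (addOne l) i)) *
      ∏ j ∈ Finset.Icc 1 (N - 1),
        (1 - 1 / (ell θ (addOne l) N - ell θ (addOne l) j)) *
          (1 - (2 * θ - 1) / (ell θ (addOne l) N - ell θ (addOne l) j + θ - 1))
      = ∏ i ∈ Finset.Icc 1 (N - 1), GG θ (ell θ l N - ell θ l i) := by
    rw [← Finset.prod_mul_distrib]
    refine Finset.prod_congr rfl fun i hi => ?_
    have hi' := Finset.mem_Icc.mp hi
    rw [hellN, hells i hi,
      show ell θ l N + 1 - ell θ l i = (ell θ l N - ell θ l i) + 1 by ring]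
    exact gammaKey θ _ hθ (ell_diff_ge θ (by linarith) l hi'.1 (by omega) le_rfl)
  rw [hDPeq, hSPeq, hspN, ← hmerge]
  ring


set_option maxHeartbeats 2000000 in
/-- Lemma 5.5, first identity: under the discrete β-ensemble `ℙ_N^s`,
`𝔼[∏_{j=1}^{N-1} (1 - 1/(ℓ_N - ℓ_j))(1 - (2θ-1)/(ℓ_N - ℓ_j + θ - 1))] = 𝔼[sθ/(ℓ_N + 1)]`. -/
theorem nekrasov_identity_down
    (θ s : ℝ) (hθ : 1 ≤ θ) (hs : 0 < s) (N : ℕ) (hN : 2 ≤ N) :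
    betaE θ s N (fun l =>
      ∏ j ∈ Finset.Icc 1 (N - 1),
        (1 - 1 / (ell θ l N - ell θ l j)) *
          (1 - (2 * θ - 1) / (ell θ l N - ell θ l j + θ - 1))) =
    betaE θ s N (fun l => s * θ / (ell θ l N + 1)) := by
  unfold betaE
  congr 1
  refine tsum_eq_tsum_of_ne_zero_bij (fun p => addOne p.val)
    (fun p q h => Subtype.ext (addOne_inj h)) ?_ (fun p => key θ s hθ hs hN p.val)
  -- support condition
  intro μ hμ
  have hμ' : (∏ j ∈ Finset.Icc 1 (N - 1),
      (1 - 1 / (ell θ μ N - ell θ μ j)) *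
        (1 - (2 * θ - 1) / (ell θ μ N - ell θ μ j + θ - 1))) ≠ 0 :=
    right_ne_zero_of_mul hμ
  have hfac := (Finset.prod_ne_zero_iff.mp hμ') (N - 1)
    (Finset.mem_Icc.mpr ⟨by omega, le_rfl⟩)
  have hfac2 : (1 - (2 * θ - 1) / (ell θ μ N - ell θ μ (N - 1) + θ - 1)) ≠ 0 :=
    right_ne_zero_of_mul hfac
  -- μ_1 > μ_2, i.e. μ.val 0 > μ.val 1
  have h01 : μ.val ⟨1, by omega⟩ < μ.val ⟨0, by omega⟩ := by
    by_contra hcon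
    have hge : μ.val ⟨1, by omega⟩ ≤ μ.val ⟨0, by omega⟩ := by
      apply μ.2; show (0:ℕ) ≤ 1; omega
    have heqv : μ.val ⟨0, by omega⟩ = μ.val ⟨1, by omega⟩ := by omega
    have hellNμ : ell θ μ N = (μ.val ⟨0, by omega⟩ : ℝ) + θ * N :=
      ell_val θ μ (by omega) le_rfl ⟨0, by omega⟩ (by show (0:ℕ) = N - N; omega)
    have hellN1μ : ell θ μ (N - 1) = (μ.val ⟨1, by omega⟩ : ℝ) + θ * (N - 1 : ℕ) :=
      ell_val θ μ (by omega) (by omega) ⟨1, by omega⟩ (by show (1:ℕ) = N - (N-1); omega)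
    have hdiff : ell θ μ N - ell θ μ (N - 1) = θ := by
      rw [hellNμ, hellN1μ, heqv, Nat.cast_sub (by omega : 1 ≤ N)]
      ring
    apply hfac2
    have h2θ : (2 * θ - 1 : ℝ) ≠ 0 := by linarith
    rw [hdiff, show θ + θ - 1 = 2 * θ - 1 by ring, div_self h2θ]
    ring
  -- construct the preimage
  have h0ge1 : 1 ≤ μ.val ⟨0, by omega⟩ := by omega
  set lam : YoungN N := ⟨fun i => if (i : ℕ) = 0 then μ.val i - 1 else μ.val i, by
    intro a b hab
    have h0 := μ.2 hab
    have hab' : (a : ℕ) ≤ b := hab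
    have hb1 : ∀ (c : Fin N), (1:ℕ) ≤ (c:ℕ) → μ.val c ≤ μ.val ⟨1, by omega⟩ := by
      intro c hc
      apply μ.2; show (1:ℕ) ≤ (c:ℕ); omega
    dsimp only
    split_ifs with h1' h2' h2'
    · omega
    · omega
    · -- b ≠ 0, a = 0
      have ha : a = ⟨0, by omega⟩ := Fin.ext h2'
      have hb := hb1 b (by omega)
      rw [ha]
      omega
    · omega⟩ with hlam
  have haddeq : addOne lam = μ := by
    apply Subtype.ext; funext i
    simp only [addOne, hlam]
    by_cases hi0 : (i : ℕ) = 0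
    · have hieq : i = ⟨0, by omega⟩ := Fin.ext hi0
      simp only [if_pos hi0]
      rw [hieq]
      omega
    · simp only [if_neg hi0]
  refine ⟨⟨lam, ?_⟩, haddeq⟩
  have hkey := key θ s hθ hs hN lam
  rw [haddeq] at hkey
  intro h0
  exact hμ (hkey.trans h0)

end
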